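/- Let (A, A*) be a tridiagonal pair on V with eigenspace orderings V_0, ..., V_d of A and V*_0, ..., V*_d of A*, with corresponding eigenvalues θ_0, ..., θ_d of A. For 0 ≤ i ≤ d let τ_i denote the polynomial (λ − θ_0)(λ − θ_1)···(λ − θ_{i−1}). Then for every nonzero vector u ∈ V*_0 and every i with 0 ≤ i ≤ d, the vector τ_i(A)u is nonzero. -/

import Mathlib

open Polynomial

/-- A tridiagonal pair on `V`, with eigenspace orderings `Ev 0, ..., Ev d` of `A`
(with eigenvalues `θ 0, ..., θ d`) and `Ew 0, ..., Ew d` of `B = A*`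
(with eigenvalues `θ' 0, ..., θ' d`).  For indices `i > d` we set `Ev i = ⊥`,
`Ew i = ⊥`, encoding the conventions `V_{-1} = 0`, `V_{d+1} = 0`
(note `Ev (0 - 1) = Ev 0` by truncated subtraction, which is harmless in the
tridiagonal conditions below since `Ev i` appears in the sum anyway). -/
structure TridiagonalPair (K V : Type*) [Field K] [AddCommGroup V] [Module K V]
    [FiniteDimensional K V] where
  A : Module.End K V
  B : Module.End K V
  d : ℕ
  Ev : ℕ → Submodule K V
  Ew : ℕ → Submodule K V
  θ : ℕ → K
  θ' : ℕ → K
  hEv_eig : ∀ i ≤ d, Ev i = Module.End.eigenspace A (θ i)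
  hEv_ne : ∀ i ≤ d, Ev i ≠ ⊥
  hEv_all : ∀ μ : K, Module.End.eigenspace A μ ≠ ⊥ → ∃ i ≤ d, θ i = μ
  hθ_inj : ∀ i ≤ d, ∀ j ≤ d, θ i = θ j → i = j
  hEv_top : (⨆ i ∈ Finset.range (d + 1), Ev i) = ⊤
  hEv_bot : ∀ i, d < i → Ev i = ⊥
  hEw_eig : ∀ i ≤ d, Ew i = Module.End.eigenspace B (θ' i)
  hEw_ne : ∀ i ≤ d, Ew i ≠ ⊥
  hEw_all : ∀ μ : K, Module.End.eigenspace B μ ≠ ⊥ → ∃ i ≤ d, θ' i = μ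
  hθ'_inj : ∀ i ≤ d, ∀ j ≤ d, θ' i = θ' j → i = j
  hEw_top : (⨆ i ∈ Finset.range (d + 1), Ew i) = ⊤
  hEw_bot : ∀ i, d < i → Ew i = ⊥
  hTriB : ∀ i ≤ d, ∀ v ∈ Ev i, B v ∈ Ev (i - 1) ⊔ Ev i ⊔ Ev (i + 1)
  hTriA : ∀ i ≤ d, ∀ v ∈ Ew i, A v ∈ Ew (i - 1) ⊔ Ew i ⊔ Ew (i + 1)
  hIrr : ∀ W : Submodule K V, (∀ v ∈ W, A v ∈ W) → (∀ v ∈ W, B v ∈ W) →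
    W = ⊥ ∨ W = ⊤

/-- The polynomial `τ_i = (λ - θ_0)(λ - θ_1) ⋯ (λ - θ_{i-1})`. -/
noncomputable def tau {K : Type*} [Field K] (θ : ℕ → K) (i : ℕ) : Polynomial K :=
  ∏ k ∈ Finset.range i, (X - C (θ k))

section Aux

variable {K V : Type*} [Field K] [AddCommGroup V] [Module K V] [FiniteDimensional K V]

/-- `aeval` on an eigenspace member. -/
lemma aeval_eig {f : Module.End K V} {μ : K} {x : V}
    (hx : x ∈ Module.End.eigenspace f μ) (q : K[X]) :
    aeval f q x = q.eval μ • x := by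
  rcases eq_or_ne x 0 with rfl | hx0
  · simp
  · exact Module.End.aeval_apply_of_hasEigenvector ⟨hx, hx0⟩

variable (p : TridiagonalPair K V)

/-- `V_0 + ⋯ + V_{m-1}`. -/
noncomputable def PP (m : ℕ) : Submodule K V := ⨆ j ∈ Finset.range m, p.Ev j

/-- `V*_0 + ⋯ + V*_{m-1}`. -/
noncomputable def QQ (m : ℕ) : Submodule K V := ⨆ j ∈ Finset.range m, p.Ew j

lemma Ev_le_PP {j m : ℕ} (hj : j < m) : p.Ev j ≤ PP p m :=
  le_iSup₂ (f := fun j (_ : j ∈ Finset.range m) => p.Ev j) j (Finset.mem_range.2 hj)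

lemma Ew_le_QQ {j m : ℕ} (hj : j < m) : p.Ew j ≤ QQ p m :=
  le_iSup₂ (f := fun j (_ : j ∈ Finset.range m) => p.Ew j) j (Finset.mem_range.2 hj)

lemma PP_mono {m m' : ℕ} (h : m ≤ m') : PP p m ≤ PP p m' :=
  iSup₂_le fun j hj => Ev_le_PP p (lt_of_lt_of_le (Finset.mem_range.1 hj) h)

lemma QQ_mono {m m' : ℕ} (h : m ≤ m') : QQ p m ≤ QQ p m' :=
  iSup₂_le fun j hj => Ew_le_QQ p (lt_of_lt_of_le (Finset.mem_range.1 hj) h)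

lemma PP_zero : PP p 0 = ⊥ := by simp [PP]

lemma QQ_zero : QQ p 0 = ⊥ := by simp [QQ]

lemma PP_top : PP p (p.d + 1) = ⊤ := p.hEv_top

/-- `(A - θ_m)` maps `V_0 + ⋯ + V_m` into `V_0 + ⋯ + V_{m-1}`. -/
lemma mapsA {m : ℕ} (hm : m ≤ p.d) :
    ∀ v ∈ PP p (m + 1), p.A v - p.θ m • v ∈ PP p m := by
  have : PP p (m + 1) ≤ Submodule.comap (p.A - p.θ m • (1 : Module.End K V)) (PP p m) := by
    refine iSup₂_le fun j hj => ?_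
    have hj' : j < m + 1 := Finset.mem_range.1 hj
    intro v hv
    have hv' : v ∈ Module.End.eigenspace p.A (p.θ j) := by
      rwa [← p.hEv_eig j (by omega)]
    have hAv : p.A v = p.θ j • v := Module.End.mem_eigenspace_iff.1 hv'
    simp only [Submodule.mem_comap, LinearMap.sub_apply, LinearMap.smul_apply,
      Module.End.one_apply, hAv, ← sub_smul]
    rcases eq_or_lt_of_le (Nat.lt_succ_iff.1 hj') with rfl | hlt
    · simp
    · exact Submodule.smul_mem _ _ (Ev_le_PP p hlt hv)
  intro v hv
  simpa using this hv

/-- `(B - θ'_m)` maps `V*_0 + ⋯ + V*_m` into `V*_0 + ⋯ + V*_{m-1}`. -/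
lemma mapsB {m : ℕ} (hm : m ≤ p.d) :
    ∀ v ∈ QQ p (m + 1), p.B v - p.θ' m • v ∈ QQ p m := by
  have : QQ p (m + 1) ≤ Submodule.comap (p.B - p.θ' m • (1 : Module.End K V)) (QQ p m) := by
    refine iSup₂_le fun j hj => ?_
    have hj' : j < m + 1 := Finset.mem_range.1 hj
    intro v hv
    have hv' : v ∈ Module.End.eigenspace p.B (p.θ' j) := by
      rwa [← p.hEw_eig j (by omega)]
    have hBv : p.B v = p.θ' j • v := Module.End.mem_eigenspace_iff.1 hv'
    simp only [Submodule.mem_comap, LinearMap.sub_apply, LinearMap.smul_apply,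
      Module.End.one_apply, hBv, ← sub_smul]
    rcases eq_or_lt_of_le (Nat.lt_succ_iff.1 hj') with rfl | hlt
    · simp
    · exact Submodule.smul_mem _ _ (Ew_le_QQ p hlt hv)
  intro v hv
  simpa using this hv

/-- `A` maps `V*_0 + ⋯ + V*_m` into `V*_0 + ⋯ + V*_{m+1}`. -/
lemma mapsA' {m : ℕ} (hm : m ≤ p.d + 1) :
    ∀ v ∈ QQ p m, p.A v ∈ QQ p (m + 1) := by
  have : QQ p m ≤ Submodule.comap p.A (QQ p (m + 1)) := by
    refine iSup₂_le fun j hj => ?_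
    have hj' : j < m := Finset.mem_range.1 hj
    intro v hv
    have := p.hTriA j (by omega) v hv
    refine Submodule.mem_comap.2 ?_
    refine (sup_le (sup_le ?_ ?_) ?_ : p.Ew (j-1) ⊔ p.Ew j ⊔ p.Ew (j+1) ≤ QQ p (m+1)) this
    · exact Ew_le_QQ p (by omega)
    · exact Ew_le_QQ p (by omega)
    · exact Ew_le_QQ p (by omega)
  intro v hv
  simpa using this hv

/-- `B` maps `V_0 + ⋯ + V_m` into `V_0 + ⋯ + V_{m+1}`. -/
lemma mapsB' {m : ℕ} (hm : m ≤ p.d + 1) :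
    ∀ v ∈ PP p m, p.B v ∈ PP p (m + 1) := by
  have : PP p m ≤ Submodule.comap p.B (PP p (m + 1)) := by
    refine iSup₂_le fun j hj => ?_
    have hj' : j < m := Finset.mem_range.1 hj
    intro v hv
    have := p.hTriB j (by omega) v hv
    refine Submodule.mem_comap.2 ?_
    refine (sup_le (sup_le ?_ ?_) ?_ : p.Ev (j-1) ⊔ p.Ev j ⊔ p.Ev (j+1) ≤ PP p (m+1)) this
    · exact Ev_le_PP p (by omega)
    · exact Ev_le_PP p (by omega)
    · exact Ev_le_PP p (by omega)
  intro v hv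
  simpa using this hv

end Aux

/-- For every nonzero `u ∈ V*_0` and every `0 ≤ i ≤ d`, the vector
`τ_i(A) u` is nonzero. -/
theorem stmt1 {K V : Type*} [Field K] [AddCommGroup V] [Module K V]
    [FiniteDimensional K V] (hpos : 0 < Module.finrank K V)
    (p : TridiagonalPair K V)
    (u : V) (hu : u ∈ p.Ew 0) (hu0 : u ≠ 0) (i : ℕ) (hi : i ≤ p.d) :
    (aeval p.A (tau p.θ i)) u ≠ 0 := by
  intro h0
  rcases Nat.eq_zero_or_pos i with rfl | hi1
  · rw [tau, Finset.range_zero, Finset.prod_empty, map_one, Module.End.one_apply] at h0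
    exact hu0 h0
  have hd1 : 1 ≤ p.d := le_trans hi1 hi
  -- Step 1: u ∈ V_0 + ⋯ + V_{i-1} ⊆ V_0 + ⋯ + V_{d-1}
  have hθne : ∀ {k l : ℕ}, k ≤ p.d → l ≤ p.d → k ≠ l → p.θ k ≠ p.θ l := by
    intro k l hk hl hkl h
    exact hkl (p.hθ_inj k hk l hl h)
  have huP : u ∈ PP p i := by
    -- Bezout: τ_i and q = ∏_{k=i}^{d}(X - θ_k) are coprime
    set q : K[X] := ∏ k ∈ Finset.Ico i (p.d + 1), (X - C (p.θ k)) with hq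
    have hcop : IsCoprime (tau p.θ i) q := by
      rw [tau, hq]
      apply IsCoprime.prod_left
      intro k hk
      apply IsCoprime.prod_right
      intro l hl
      have hk' := Finset.mem_range.1 hk
      have hl' := Finset.mem_Ico.1 hl
      refine Polynomial.isCoprime_X_sub_C_of_isUnit_sub ?_
      exact (sub_ne_zero.2 (hθne (by omega) (by omega) (by omega))).isUnit
    obtain ⟨a, b, hab⟩ := hcop
    have hq_maps : ∀ v, aeval p.A q v ∈ PP p i := by
      intro v
      have hv : v ∈ PP p (p.d + 1) := by rw [PP_top]; trivial
      have : PP p (p.d + 1) ≤ Submodule.comap (aeval p.A q) (PP p i) := by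
        refine iSup₂_le fun j hj => ?_
        have hj' : j < p.d + 1 := Finset.mem_range.1 hj
        intro w hw
        have hw' : w ∈ Module.End.eigenspace p.A (p.θ j) := by
          rwa [← p.hEv_eig j (by omega)]
        refine Submodule.mem_comap.2 ?_
        rw [aeval_eig hw']
        rcases lt_or_ge j i with hji | hji
        · exact Submodule.smul_mem _ _ (Ev_le_PP p hji hw)
        · have : q.eval (p.θ j) = 0 := by
            rw [hq, Polynomial.eval_prod]
            apply Finset.prod_eq_zero (Finset.mem_Ico.2 ⟨hji, by omega⟩)
            simp
          rw [this, zero_smul]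
          exact Submodule.zero_mem _
      simpa using this hv
    have hb_maps : ∀ v ∈ PP p i, aeval p.A b v ∈ PP p i := by
      have : PP p i ≤ Submodule.comap (aeval p.A b) (PP p i) := by
        refine iSup₂_le fun j hj => ?_
        have hj' : j < i := Finset.mem_range.1 hj
        intro w hw
        have hw' : w ∈ Module.End.eigenspace p.A (p.θ j) := by
          rwa [← p.hEv_eig j (by omega)]
        refine Submodule.mem_comap.2 ?_
        rw [aeval_eig hw']
        exact Submodule.smul_mem _ _ (Ev_le_PP p hj' hw)
      intro v hv; simpa using this hv
    have key : aeval p.A b (aeval p.A q u) = u := by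
      have h1 : aeval p.A (a * tau p.θ i + b * q) u = u := by
        rw [hab]; simp
      rw [map_add, map_mul, map_mul] at h1
      simp only [LinearMap.add_apply, Module.End.mul_apply] at h1
      rwa [h0, map_zero, zero_add] at h1
    rw [← key]
    exact hb_maps _ (hq_maps u)
  -- Step 2: the invariant subspace W
  set W : Submodule K V := ⨆ j ∈ Finset.range p.d, (QQ p (j + 1) ⊓ PP p (p.d - j)) with hW
  have hWle : ∀ {j : ℕ}, j < p.d → QQ p (j + 1) ⊓ PP p (p.d - j) ≤ W := fun {j} hj =>
    le_iSup₂ (f := fun j (_ : j ∈ Finset.range p.d) => QQ p (j + 1) ⊓ PP p (p.d - j)) j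
      (Finset.mem_range.2 hj)
  have huW : u ∈ W := by
    refine hWle hd1 ⟨Ew_le_QQ p (by omega) hu, ?_⟩
    exact PP_mono p (by omega) huP
  -- A-invariance
  have hWA : ∀ v ∈ W, p.A v ∈ W := by
    have : W ≤ Submodule.comap p.A W := by
      refine iSup₂_le fun j hj => ?_
      have hj' : j < p.d := Finset.mem_range.1 hj
      rintro v ⟨hvQ, hvP⟩
      refine Submodule.mem_comap.2 ?_
      set m := p.d - 1 - j with hm
      have hdj : p.d - j = m + 1 := by omega
      have h1 : p.A v - p.θ m • v ∈ PP p m := by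
        apply mapsA p (by omega)
        rw [← hdj]; exact hvP
      have h2 : p.A v - p.θ m • v ∈ QQ p (j + 2) := by
        have hA : p.A v ∈ QQ p (j + 2) := mapsA' p (by omega) v hvQ
        exact Submodule.sub_mem _ hA (Submodule.smul_mem _ _ (QQ_mono p (by omega) hvQ))
      have hsplit : p.A v = (p.A v - p.θ m • v) + p.θ m • v := by abel
      rw [hsplit]
      refine Submodule.add_mem _ ?_ (Submodule.smul_mem _ _ (hWle hj' ⟨hvQ, hvP⟩))
      rcases lt_or_ge (j + 1) p.d with hlt | hge
      · refine hWle hlt ⟨h2, ?_⟩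
        have : p.d - (j + 1) = m := by omega
        rw [this]; exact h1
      · have hm0 : m = 0 := by omega
        rw [hm0, PP_zero, Submodule.mem_bot] at h1
        rw [hm0, h1]; exact Submodule.zero_mem _
    intro v hv; simpa using this hv
  -- B-invariance
  have hWB : ∀ v ∈ W, p.B v ∈ W := by
    have : W ≤ Submodule.comap p.B W := by
      refine iSup₂_le fun j hj => ?_
      have hj' : j < p.d := Finset.mem_range.1 hj
      rintro v ⟨hvQ, hvP⟩
      refine Submodule.mem_comap.2 ?_
      have h1 : p.B v - p.θ' j • v ∈ QQ p j := mapsB p (by omega) v hvQ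
      have h2 : p.B v - p.θ' j • v ∈ PP p (p.d - j + 1) := by
        have hdj : p.d - j = (p.d - 1 - j) + 1 := by omega
        have hB : p.B v ∈ PP p (p.d - j + 1) := by
          apply mapsB' p (by omega) v hvP
        exact Submodule.sub_mem _ hB (Submodule.smul_mem _ _ (PP_mono p (by omega) hvP))
      have hsplit : p.B v = (p.B v - p.θ' j • v) + p.θ' j • v := by abel
      rw [hsplit]
      refine Submodule.add_mem _ ?_ (Submodule.smul_mem _ _ (hWle hj' ⟨hvQ, hvP⟩))
      rcases Nat.eq_zero_or_pos j with rfl | hjpos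
      · rw [QQ_zero, Submodule.mem_bot] at h1
        rw [h1]; exact Submodule.zero_mem _
      · have hj1 : j - 1 < p.d := by omega
        refine hWle hj1 ⟨?_, ?_⟩
        · have : j - 1 + 1 = j := by omega
          rw [this]; exact h1
        · have : p.d - (j - 1) = p.d - j + 1 := by omega
          rw [this]; exact h2
    intro v hv; simpa using this hv
  -- W = ⊤
  have hWtop : W = ⊤ := by
    rcases p.hIrr W hWA hWB with hbot | htop
    · rw [hbot, Submodule.mem_bot] at huW
      exact absurd huW hu0
    · exact htop
  -- But W ≤ V_0 + ⋯ + V_{d-1}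
  have hWP : W ≤ PP p p.d := by
    refine iSup₂_le fun j hj => ?_
    exact le_trans inf_le_right (PP_mono p (by omega))
  -- Contradiction with V_d ≠ ⊥
  obtain ⟨v, hv, hv0⟩ := Submodule.ne_bot_iff _ |>.1 (p.hEv_ne p.d le_rfl)
  have hv' : v ∈ Module.End.eigenspace p.A (p.θ p.d) := by
    rwa [← p.hEv_eig p.d le_rfl]
  have hvP : v ∈ PP p p.d := hWP (hWtop ▸ Submodule.mem_top)
  have hr0 : aeval p.A (tau p.θ p.d) v = 0 := by
    have : PP p p.d ≤ Submodule.comap (aeval p.A (tau p.θ p.d)) ⊥ := by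
      refine iSup₂_le fun j hj => ?_
      have hj' : j < p.d := Finset.mem_range.1 hj
      intro w hw
      have hw' : w ∈ Module.End.eigenspace p.A (p.θ j) := by
        rwa [← p.hEv_eig j (by omega)]
      refine Submodule.mem_comap.2 ?_
      rw [aeval_eig hw']
      have : (tau p.θ p.d).eval (p.θ j) = 0 := by
        rw [tau, Polynomial.eval_prod]
        apply Finset.prod_eq_zero (Finset.mem_range.2 hj')
        simp
      rw [this, zero_smul]
      exact Submodule.zero_mem _
    simpa using this hvP
  have hrne : aeval p.A (tau p.θ p.d) v ≠ 0 := by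
    rw [aeval_eig hv']
    have : (tau p.θ p.d).eval (p.θ p.d) ≠ 0 := by
      rw [tau, Polynomial.eval_prod]
      apply Finset.prod_ne_zero_iff.2
      intro k hk
      have hk' := Finset.mem_range.1 hk
      simp only [Polynomial.eval_sub, Polynomial.eval_X, Polynomial.eval_C]
      exact sub_ne_zero.2 (hθne le_rfl (by omega) (by omega))
    exact smul_ne_zero this hv0
  exact hrne hr0
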